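/- For all real P_X > 1 and P_J > (1+P_X)²/P_X, with C_1 = C_2 = (1/2)·log₂(1+P_X), the gap C_1 + (1/2)·log₂(1 + P_X/(P_J+1)) − (1/2)·log₂(P_X/(P_X/(P_X+1) + P_X/(2^(2C_1)−1) + P_X·2^(−2C_2))) is at most (1/2)·log₂ 8 = 1.5. -/

import Mathlib

open Real

theorem caseC_gap_cutset (P_X P_J : ℝ) (hX : 1 < P_X) (hJ : (1 + P_X) ^ 2 / P_X < P_J) :
    let C1 := (1/2) * logb 2 (1 + P_X)
    let C2 := (1/2) * logb 2 (1 + P_X)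
    C1 + (1/2) * logb 2 (1 + P_X / (P_J + 1))
      - (1/2) * logb 2 (P_X /
          (P_X / (P_X + 1) + P_X / ((2:ℝ) ^ (2 * C1) - 1)
            + P_X * (2:ℝ) ^ (-(2 * C2)))) ≤ (1/2) * logb 2 8 := by
  intro C1 C2
  have hx0 : (0:ℝ) < P_X := lt_trans one_pos hX
  have hx1 : (0:ℝ) < 1 + P_X := by linarith
  have hJ0 : (0:ℝ) < P_J := lt_trans (by positivity) hJ
  have hJ1 : (0:ℝ) < P_J + 1 := by linarith
  have hJ' : (1 + P_X) ^ 2 < P_J * P_X := by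
    have := (div_lt_iff₀ hx0).mp hJ
    linarith
  have h2C1 : (2:ℝ) ^ (2 * C1) = 1 + P_X := by
    have h : 2 * C1 = logb 2 (1 + P_X) := by
      show 2 * ((1/2) * logb 2 (1 + P_X)) = _; ring
    rw [h, rpow_logb (by norm_num) (by norm_num) hx1]
  have h2C2 : (2:ℝ) ^ (-(2 * C2)) = (1 + P_X)⁻¹ := by
    have h : 2 * C2 = logb 2 (1 + P_X) := by
      show 2 * ((1/2) * logb 2 (1 + P_X)) = _; ring
    rw [rpow_neg (by norm_num), h, rpow_logb (by norm_num) (by norm_num) hx1]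
  rw [h2C1, h2C2]
  have hden : P_X / (P_X + 1) + P_X / (1 + P_X - 1) + P_X * (1 + P_X)⁻¹
      = (3 * P_X + 1) / (P_X + 1) := by
    rw [add_sub_cancel_left]; field_simp
    ring
  rw [hden]
  have hc : P_X / ((3 * P_X + 1) / (P_X + 1)) = P_X * (P_X + 1) / (3 * P_X + 1) := by
    field_simp
  rw [hc]
  set a := 1 + P_X with ha
  set b := 1 + P_X / (P_J + 1) with hb
  set c := P_X * (P_X + 1) / (3 * P_X + 1) with hc'
  have hb0 : 0 < b := by
    have : 0 < P_X / (P_J + 1) := by positivity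
    simp [hb]; linarith
  have hc0 : 0 < c := by
    rw [hc']; positivity
  have key : a * b / c ≤ 8 := by
    have h3 : (0:ℝ) < 3 * P_X + 1 := by linarith
    have e : a * b / c
        = ((1 + P_X) * ((P_J + 1) + P_X) * (3 * P_X + 1)) / ((P_J + 1) * (P_X * (P_X + 1))) := by
      rw [ha, hb, hc']; field_simp
    rw [e, div_le_iff₀ (by positivity)]
    nlinarith [mul_pos hx1 hx0, hJ', mul_pos hx0 hJ0,
      mul_lt_mul_of_pos_left hJ' hx1, sq_nonneg (P_X - 1)]
  calc C1 + 1 / 2 * logb 2 b - 1 / 2 * logb 2 c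
      = (1/2) * (logb 2 a + logb 2 b - logb 2 c) := by
        show (1/2) * logb 2 a + 1 / 2 * logb 2 b - 1 / 2 * logb 2 c = _; ring
    _ = (1/2) * logb 2 (a * b / c) := by
        rw [logb_div (by positivity) (ne_of_gt hc0), logb_mul (ne_of_gt hx1) (ne_of_gt hb0)]
    _ ≤ (1/2) * logb 2 8 := by
        have h8 : logb 2 (a * b / c) ≤ logb 2 8 :=
          logb_le_logb_of_le (by norm_num) (by positivity) key
        linarith
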